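/- For every real α > 2 and every x ≥ 0, the SIR coverage function satisfies P_α(x) ≥ (1 + x)^(−2/(α−2)). -/

import Mathlib

open MeasureTheory Filter Real Set

/-- The closed-form downlink SIR coverage denominator:
`h α x = 1 + ∫_1^∞ x / (x + w^(α/2)) dw`. -/
noncomputable def hcov (α x : ℝ) : ℝ := 1 + ∫ w in Set.Ioi (1 : ℝ), x / (x + w ^ (α / 2))

/-- The SIR coverage function `P_α(x) = h_α(x)⁻¹`. -/
noncomputable def Pcov (α x : ℝ) : ℝ := (hcov α x)⁻¹

namespace SirAux

open scoped Topology

/-- The interference integral, with `β = α/2`. -/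
noncomputable def Iint (β x : ℝ) : ℝ := ∫ w in Set.Ioi (1 : ℝ), x / (x + w ^ β)

/-- The derivative integrand integral. -/
noncomputable def Bint (β x : ℝ) : ℝ := ∫ w in Set.Ioi (1 : ℝ), w ^ β / (x + w ^ β) ^ 2

variable {β x : ℝ}

lemma denom_pos (hx : 0 ≤ x) {w : ℝ} (hw : w ∈ Ioi (1 : ℝ)) : 0 < x + w ^ β := by
  have hw0 : (0 : ℝ) < w := lt_trans one_pos hw
  have := rpow_pos_of_pos hw0 β
  linarith

/-- integrability of the reference function `w ^ (-β)` -/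
lemma ref_integrable (hβ : 1 < β) : IntegrableOn (fun w : ℝ => w ^ (-β)) (Ioi (1 : ℝ)) :=
  integrableOn_Ioi_rpow_of_lt (by linarith) one_pos

/-- The basic integrand bound `x/(x+w^β) ≤ x w^(-β)`. -/
lemma frac_le_aux (hx : 0 ≤ x) {w : ℝ} (hw : w ∈ Ioi (1 : ℝ)) :
    x / (x + w ^ β) ≤ x * w ^ (-β) := by
  have hw0 : (0 : ℝ) < w := lt_trans one_pos hw
  have hpw : (0 : ℝ) < w ^ β := rpow_pos_of_pos hw0 β
  have h : x * w ^ (-β) = x / w ^ β := by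
    rw [Real.rpow_neg hw0.le, div_eq_mul_inv]
  rw [h]
  exact div_le_div_of_nonneg_left hx hpw (by linarith)

lemma cont_on_I (hx : 0 ≤ x) : ContinuousOn (fun w : ℝ => x / (x + w ^ β)) (Ioi (1 : ℝ)) := by
  apply ContinuousOn.div continuousOn_const
  · exact continuousOn_const.add (fun w hw =>
      (Real.continuousAt_rpow_const w β
        (Or.inl (ne_of_gt (lt_trans one_pos hw)))).continuousWithinAt)
  · exact fun w hw => ne_of_gt (denom_pos hx hw)

lemma I_integrable (hβ : 1 < β) (hx : 0 ≤ x) :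
    IntegrableOn (fun w : ℝ => x / (x + w ^ β)) (Ioi (1 : ℝ)) := by
  apply Integrable.mono' ((ref_integrable hβ).const_mul x)
    ((cont_on_I hx).aestronglyMeasurable measurableSet_Ioi)
  filter_upwards [ae_restrict_mem measurableSet_Ioi] with w hw
  have hd := denom_pos (β := β) hx hw
  rw [Real.norm_eq_abs, abs_of_nonneg (by positivity)]
  exact frac_le_aux hx hw

lemma B_bound (hx : 0 ≤ x) {w : ℝ} (hw : w ∈ Ioi (1 : ℝ)) :
    w ^ β / (x + w ^ β) ^ 2 ≤ w ^ (-β) := by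
  have hw0 : (0 : ℝ) < w := lt_trans one_pos hw
  have hpw : (0 : ℝ) < w ^ β := rpow_pos_of_pos hw0 β
  have hd := denom_pos (β := β) hx hw
  have h1 : w ^ β / (x + w ^ β) ^ 2 ≤ w ^ β / (w ^ β) ^ 2 :=
    div_le_div_of_nonneg_left hpw.le (by positivity) (by nlinarith)
  have h2 : w ^ β / (w ^ β) ^ 2 = w ^ (-β) := by
    rw [Real.rpow_neg hw0.le, sq]
    rw [div_mul_cancel_left₀ (ne_of_gt hpw)]
  linarith [h1, h2.le]

lemma cont_on_B (hx : 0 ≤ x) :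
    ContinuousOn (fun w : ℝ => w ^ β / (x + w ^ β) ^ 2) (Ioi (1 : ℝ)) := by
  apply ContinuousOn.div
  · exact fun w hw => (Real.continuousAt_rpow_const w β (Or.inl
      (ne_of_gt (lt_trans one_pos hw)))).continuousWithinAt
  · exact (continuousOn_const.add (fun w hw => (Real.continuousAt_rpow_const w β (Or.inl
      (ne_of_gt (lt_trans one_pos hw)))).continuousWithinAt)).pow 2
  · exact fun w hw => by
      have := denom_pos (β := β) hx hw
      positivity

lemma B_integrable (hβ : 1 < β) (hx : 0 ≤ x) :
    IntegrableOn (fun w : ℝ => w ^ β / (x + w ^ β) ^ 2) (Ioi (1 : ℝ)) := by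
  apply Integrable.mono' (ref_integrable hβ)
    ((cont_on_B hx).aestronglyMeasurable measurableSet_Ioi)
  filter_upwards [ae_restrict_mem measurableSet_Ioi] with w hw
  have hw0 : (0 : ℝ) < w := lt_trans one_pos hw
  have hd := denom_pos (β := β) hx hw
  rw [Real.norm_eq_abs, abs_of_nonneg (by positivity)]
  exact B_bound hx hw

lemma I_nonneg (hβ : 1 < β) (hx : 0 ≤ x) : 0 ≤ Iint β x := by
  apply setIntegral_nonneg measurableSet_Ioi
  intro w hw
  have hd := denom_pos (β := β) hx hw
  positivity

lemma integral_ref (hβ : 1 < β) : (∫ w in Ioi (1 : ℝ), w ^ (-β)) = 1 / (β - 1) := by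
  rw [integral_Ioi_rpow_of_lt (by linarith) one_pos, Real.one_rpow]
  rw [div_eq_div_iff (by linarith) (by linarith)]
  ring

lemma I_le (hβ : 1 < β) (hx : 0 ≤ x) : Iint β x ≤ x / (β - 1) := by
  have h : Iint β x ≤ ∫ w in Ioi (1 : ℝ), x * w ^ (-β) := by
    apply setIntegral_mono_on (I_integrable hβ hx) ((ref_integrable hβ).const_mul x)
      measurableSet_Ioi
    intro w hw
    exact frac_le_aux hx hw
  calc Iint β x ≤ ∫ w in Ioi (1 : ℝ), x * w ^ (-β) := h
    _ = x * ∫ w in Ioi (1 : ℝ), w ^ (-β) := integral_const_mul x _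
    _ = x * (1 / (β - 1)) := by rw [integral_ref hβ]
    _ = x / (β - 1) := by ring

/-- Differentiation under the integral sign. -/
lemma I_hasDeriv (hβ : 1 < β) (hx : 0 < x) :
    HasDerivAt (fun t => Iint β t) (Bint β x) x := by
  have key := hasDerivAt_integral_of_dominated_loc_of_deriv_le
    (F := fun (t : ℝ) (w : ℝ) => t / (t + w ^ β))
    (F' := fun (t : ℝ) (w : ℝ) => w ^ β / (t + w ^ β) ^ 2)
    (x₀ := x) (μ := volume.restrict (Ioi (1 : ℝ)))
    (bound := fun w : ℝ => w ^ (-β)) (Metric.ball_mem_nhds x (half_pos hx))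
    ?meas ((I_integrable hβ hx.le : _)) ?meas' ?bd (ref_integrable hβ) ?diff
  · exact key.2
  case meas =>
    filter_upwards [Ioi_mem_nhds hx] with t ht
    exact (cont_on_I (β := β) ht.le).aestronglyMeasurable measurableSet_Ioi
  case meas' =>
    exact (cont_on_B hx.le).aestronglyMeasurable measurableSet_Ioi
  case bd =>
    filter_upwards [ae_restrict_mem measurableSet_Ioi] with w hw t ht
    have htpos : 0 < t := by
      rw [Metric.mem_ball, Real.dist_eq, abs_lt] at ht
      linarith
    have hw0 : (0 : ℝ) < w := lt_trans one_pos hw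
    have hd := denom_pos (β := β) htpos.le hw
    rw [Real.norm_eq_abs, abs_of_nonneg (by positivity)]
    exact B_bound htpos.le hw
  case diff =>
    filter_upwards [ae_restrict_mem measurableSet_Ioi] with w hw t ht
    have htpos : 0 < t := by
      rw [Metric.mem_ball, Real.dist_eq, abs_lt] at ht
      linarith
    have hd := denom_pos (β := β) htpos.le hw
    have h1 := (hasDerivAt_id t).div ((hasDerivAt_id t).add_const (w ^ β)) (ne_of_gt hd)
    refine h1.congr_deriv ?_
    simp only [id_eq, one_mul, mul_one]
    ring

/-- Integration by parts identity: `I = β x B - x/(1+x)`. -/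
lemma ibp (hβ : 1 < β) (hx : 0 < x) :
    Iint β x = β * x * Bint β x - x / (1 + x) := by
  set f : ℝ → ℝ := fun w => w * (x / (x + w ^ β)) with hf
  set f' : ℝ → ℝ := fun w => x / (x + w ^ β) - β * x * (w ^ β / (x + w ^ β) ^ 2) with hf'
  have hderiv : ∀ w ∈ Ioi (1 : ℝ), HasDerivAt f (f' w) w := by
    intro w hw
    have hw0 : (0 : ℝ) < w := lt_trans one_pos hw
    have hd := denom_pos (β := β) hx.le hw
    have hrw : HasDerivAt (fun s : ℝ => s ^ β) (β * w ^ (β - 1)) w :=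
      Real.hasDerivAt_rpow_const (Or.inl (ne_of_gt hw0))
    have hinner : HasDerivAt (fun s : ℝ => x / (x + s ^ β))
        ((0 * (x + w ^ β) - x * (0 + β * w ^ (β - 1))) / (x + w ^ β) ^ 2) w :=
      (hasDerivAt_const w x).div ((hasDerivAt_const w x).add hrw) (ne_of_gt hd)
    have hmul := (hasDerivAt_id w).mul hinner
    refine hmul.congr_deriv ?_
    have hwβ : w ^ (β - 1) * w = w ^ β := by
      rw [← Real.rpow_add_one (ne_of_gt hw0) (β - 1)]
      ring_nf
    simp only [hf', id_eq, one_mul, zero_mul, zero_add, zero_sub]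
    linear_combination (-(β * x / (x + w ^ β) ^ 2)) * hwβ
  have hcont : ContinuousWithinAt f (Ici (1 : ℝ)) 1 := by
    apply ContinuousWithinAt.mul continuousWithinAt_id
    apply ContinuousWithinAt.div continuousWithinAt_const
    · exact continuousWithinAt_const.add
        (Real.continuousAt_rpow_const 1 β (Or.inl one_ne_zero)).continuousWithinAt
    · rw [Real.one_rpow]; positivity
  have hf'int : IntegrableOn f' (Ioi (1 : ℝ)) :=
    (I_integrable hβ hx.le).sub ((B_integrable hβ hx.le).const_mul (β * x))
  have htend : Tendsto f atTop (𝓝 0) := by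
    have hub : ∀ᶠ w in atTop, f w ≤ x * w ^ (1 - β) := by
      filter_upwards [eventually_gt_atTop (1 : ℝ)] with w hw
      have hw0 : (0 : ℝ) < w := lt_trans one_pos hw
      have hpw : (0 : ℝ) < w ^ β := rpow_pos_of_pos hw0 β
      have hd := denom_pos (β := β) hx.le (mem_Ioi.mpr hw)
      have h1 : w ^ (1 - β) = w / w ^ β := by
        rw [Real.rpow_sub hw0, Real.rpow_one]
      have h2 : f w = (w * x) / (x + w ^ β) := by
        show w * (x / (x + w ^ β)) = _
        ring
      rw [h2, h1, show x * (w / w ^ β) = (x * w) / w ^ β from by ring,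
        div_le_div_iff₀ hd hpw]
      nlinarith [mul_nonneg (mul_nonneg hx.le hw0.le) hx.le]
    have hlb : ∀ᶠ w in atTop, 0 ≤ f w := by
      filter_upwards [eventually_gt_atTop (1 : ℝ)] with w hw
      have hw0 : (0 : ℝ) < w := lt_trans one_pos hw
      have hd := denom_pos (β := β) hx.le (mem_Ioi.mpr hw)
      have hfr : 0 ≤ x / (x + w ^ β) := by positivity
      exact mul_nonneg hw0.le hfr
    have hto : Tendsto (fun w : ℝ => x * w ^ (1 - β)) atTop (𝓝 0) := by
      have h0 : Tendsto (fun w : ℝ => w ^ (1 - β)) atTop (𝓝 0) := by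
        have := tendsto_rpow_neg_atTop (show (0:ℝ) < β - 1 by linarith)
        convert this using 2
        ring_nf
      simpa using h0.const_mul x
    exact tendsto_of_tendsto_of_tendsto_of_le_of_le' tendsto_const_nhds hto hlb hub
  have hint := integral_Ioi_of_hasDerivAt_of_tendsto hcont hderiv hf'int htend
  have hf1 : f 1 = x / (x + 1) := by
    show (1 : ℝ) * (x / (x + 1 ^ β)) = x / (x + 1)
    rw [Real.one_rpow, one_mul]
  rw [hf1] at hint
  have hsplit : ∫ w in Ioi (1 : ℝ), f' w = Iint β x - β * x * Bint β x := by
    rw [hf']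
    rw [integral_sub (I_integrable hβ hx.le)
      ((B_integrable hβ hx.le).const_mul (β * x))]
    rw [integral_const_mul]
    rfl
  rw [hsplit] at hint
  have hcomm : x / (x + 1) = x / (1 + x) := by rw [add_comm]
  rw [hcomm] at hint
  linarith

/-- Key differential inequality: `(1+x) B ≤ (1+I)/(β-1)`. -/
lemma key_ineq (hβ : 1 < β) (hx : 0 < x) :
    (1 + x) * Bint β x ≤ (1 + Iint β x) / (β - 1) := by
  have hibp := ibp hβ hx
  have hIle := I_le hβ hx.le
  have hInn := I_nonneg hβ hx.le
  have hβ1 : (0 : ℝ) < β - 1 := by linarith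
  have h1x : (0 : ℝ) < 1 + x := by linarith
  have hβx : (0 : ℝ) < β * x := by positivity
  have hBval : β * x * Bint β x = Iint β x + x / (1 + x) := by linarith
  have hI2 : (β - 1) * Iint β x ≤ x := by
    have h : Iint β x * (β - 1) ≤ x := (le_div_iff₀ hβ1).mp hIle
    linarith
  have e1 : (1 + x) * (x / (1 + x)) = x := by field_simp
  have h3 : (β * x) * ((1 + x) * Bint β x) = (1 + x) * Iint β x + x := by
    rw [show (β * x) * ((1 + x) * Bint β x) = (1 + x) * (β * x * Bint β x) from by ring,
      hBval, mul_add, e1]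
  rw [le_div_iff₀ hβ1, ← mul_le_mul_iff_right₀ hβx]
  have h4 : (β * x) * ((1 + x) * Bint β x * (β - 1)) =
      (β - 1) * ((1 + x) * Iint β x + x) := by
    rw [show (β * x) * ((1 + x) * Bint β x * (β - 1)) =
        (β - 1) * ((β * x) * ((1 + x) * Bint β x)) from by ring, h3]
  rw [h4]
  nlinarith [hI2, mul_nonneg hx.le hInn, hβ1]

lemma I_zero (hβ : 1 < β) : Iint β 0 = 0 := by
  unfold Iint
  simp

/-- Continuity of `I` on `Ici 0`. -/
lemma I_continuousOn (hβ : 1 < β) : ContinuousOn (fun t => Iint β t) (Ici (0 : ℝ)) := by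
  intro t ht
  rcases eq_or_lt_of_le (mem_Ici.mp ht) with h | h
  · rw [← h]
    rw [ContinuousWithinAt, I_zero hβ, Metric.tendsto_nhdsWithin_nhds]
    intro ε hε
    refine ⟨(β - 1) * ε, mul_pos (by linarith) hε, fun s hs hds => ?_⟩
    rw [Real.dist_eq, sub_zero] at hds ⊢
    have h0 : (0 : ℝ) ≤ s := hs
    rw [abs_of_nonneg (I_nonneg hβ h0)]
    rw [abs_of_nonneg h0] at hds
    calc Iint β s ≤ s / (β - 1) := I_le hβ h0
      _ < ε := by
          rw [div_lt_iff₀ (show (0:ℝ) < β - 1 by linarith)]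
          linarith
  · exact ((I_hasDeriv hβ h).continuousAt).continuousWithinAt

/-- Main inequality: `1 + I_β(x) ≤ (1+x)^(1/(β-1))`. -/
lemma main_ineq (hβ : 1 < β) (hx : 0 ≤ x) :
    1 + Iint β x ≤ (1 + x) ^ (1 / (β - 1)) := by
  set δ : ℝ := 1 / (β - 1) with hδ
  set G : ℝ → ℝ := fun t => (1 + Iint β t) * (1 + t) ^ (-δ) with hG
  -- G has nonpositive derivative on Ioi 0
  have hGderiv : ∀ t ∈ Ioi (0 : ℝ), HasDerivAt G
      (Bint β t * (1 + t) ^ (-δ) + (1 + Iint β t) * (-δ * (1 + t) ^ (-δ - 1))) t := by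
    intro t ht
    have ht0 : (0 : ℝ) < t := ht
    have h1t : (0 : ℝ) < 1 + t := by linarith
    have h1 : HasDerivAt (fun s => 1 + Iint β s) (Bint β t) t :=
      (I_hasDeriv hβ ht0).const_add 1
    have h2 : HasDerivAt (fun s : ℝ => (1 + s) ^ (-δ)) (-δ * (1 + t) ^ (-δ - 1)) t := by
      have hr : HasDerivAt (fun y : ℝ => y ^ (-δ)) (-δ * (1 + t) ^ (-δ - 1)) (1 + t) :=
        Real.hasDerivAt_rpow_const (Or.inl (ne_of_gt h1t))
      have hc : HasDerivAt (fun s : ℝ => 1 + s) 1 t := (hasDerivAt_id t).const_add 1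
      simpa [Function.comp_def] using hr.comp t hc
    exact h1.mul h2
  have hGcont : ContinuousOn G (Ici (0 : ℝ)) := by
    apply ContinuousOn.mul
    · exact continuousOn_const.add (I_continuousOn hβ)
    · intro t ht
      have h1t : (0 : ℝ) < 1 + t := by
        have := mem_Ici.mp ht; linarith
      exact ((Real.continuousAt_rpow_const (1 + t) (-δ)
        (Or.inl (ne_of_gt h1t))).comp (by fun_prop)).continuousWithinAt
  have hGanti : AntitoneOn G (Ici (0 : ℝ)) := by
    apply antitoneOn_of_deriv_nonpos (convex_Ici 0) hGcont
    · intro t ht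
      rw [interior_Ici] at ht
      exact (hGderiv t ht).differentiableAt.differentiableWithinAt
    · intro t ht
      rw [interior_Ici] at ht
      rw [(hGderiv t ht).deriv]
      have ht0 : (0 : ℝ) < t := ht
      have h1t : (0 : ℝ) < 1 + t := by linarith
      have hkey := key_ineq hβ ht0
      have hrp : (0 : ℝ) < (1 + t) ^ (-δ - 1) := rpow_pos_of_pos h1t _
      have hsplit : (1 + t) ^ (-δ) = (1 + t) ^ (-δ - 1) * (1 + t) := by
        rw [← Real.rpow_add_one (ne_of_gt h1t) (-δ - 1)]
        ring_nf
      rw [hsplit]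
      have hfac : Bint β t * ((1 + t) ^ (-δ - 1) * (1 + t)) +
          (1 + Iint β t) * (-δ * (1 + t) ^ (-δ - 1)) =
          (1 + t) ^ (-δ - 1) * ((1 + t) * Bint β t - δ * (1 + Iint β t)) := by ring
      rw [hfac]
      apply mul_nonpos_of_nonneg_of_nonpos hrp.le
      rw [sub_nonpos]
      have hδeq : δ * (1 + Iint β t) = (1 + Iint β t) / (β - 1) := by
        rw [hδ]; ring
      rw [hδeq]
      exact hkey
  have hG0 : G 0 = 1 := by
    rw [hG]
    simp [I_zero hβ, Real.one_rpow]
  have hle := hGanti (mem_Ici.mpr le_rfl) (mem_Ici.mpr hx) hx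
  rw [hG0] at hle
  have hle2 : (1 + Iint β x) * (1 + x) ^ (-δ) ≤ 1 := hle
  have h1x : (0 : ℝ) < 1 + x := by linarith
  have hpos : (0 : ℝ) < (1 + x) ^ δ := rpow_pos_of_pos h1x δ
  have hneg : (1 + x) ^ (-δ) = ((1 + x) ^ δ)⁻¹ := Real.rpow_neg h1x.le δ
  rw [hneg] at hle2
  calc 1 + Iint β x = (1 + Iint β x) * ((1 + x) ^ δ)⁻¹ * (1 + x) ^ δ := by
        field_simp
    _ ≤ 1 * (1 + x) ^ δ := mul_le_mul_of_nonneg_right hle2 hpos.le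
    _ = (1 + x) ^ δ := one_mul _

end SirAux

/-- For every `α > 2` and `x ≥ 0`, `P_α(x) ≥ (1 + x)^(-2/(α-2))`. -/
theorem sir_coverage_ultra_reliability_lower_bound (α : ℝ) (hα : 2 < α) (x : ℝ) (hx : 0 ≤ x) :
    (1 + x) ^ (-(2 / (α - 2))) ≤ Pcov α x := by
  have hβ : 1 < α / 2 := by linarith
  have hδ : 1 / (α / 2 - 1) = 2 / (α - 2) := by
    rw [div_eq_div_iff (by linarith) (by linarith)]
    ring
  have hmain := SirAux.main_ineq hβ hx
  rw [hδ] at hmain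
  have hIeq : hcov α x = 1 + SirAux.Iint (α / 2) x := rfl
  have h1x : (0 : ℝ) < 1 + x := by linarith
  have hhpos : 0 < hcov α x := by
    rw [hIeq]
    have := SirAux.I_nonneg hβ hx
    linarith
  rw [Pcov, Real.rpow_neg h1x.le]
  apply inv_anti₀ hhpos
  rw [hIeq]
  exact hmain
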